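/- For every integer n ≥ 1, the number of (2n+1)×(2n+1) DASASMs is divisible by 3. -/

import Mathlib

/-- `A` is an alternating sign matrix: in every row and every column the entries lie in
`{-1,0,1}`, the partial sums (from one end) are all `0` or `1`, and the full sums are `1`
(equivalently, the nonzero entries of every row and column alternate in sign and sum to `1`). -/
def IsAsm {n : ℕ} (A : Matrix (Fin n) (Fin n) ℤ) : Prop :=
  (∀ i j, A i j = -1 ∨ A i j = 0 ∨ A i j = 1) ∧
  (∀ i k : Fin n, (∑ j ∈ Finset.Iic k, A i j) = 0 ∨ (∑ j ∈ Finset.Iic k, A i j) = 1) ∧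
  (∀ i : Fin n, (∑ j, A i j) = 1) ∧
  (∀ j k : Fin n, (∑ i ∈ Finset.Iic k, A i j) = 0 ∨ (∑ i ∈ Finset.Iic k, A i j) = 1) ∧
  (∀ j : Fin n, (∑ i, A i j) = 1)
/-- `A` is a diagonally and antidiagonally symmetric alternating sign matrix:
`A i j = A j i` and `A i j = A (n+1-j) (n+1-i)` (in 1-based indexing). -/
def IsDasasm {n : ℕ} (A : Matrix (Fin n) (Fin n) ℤ) : Prop :=
  IsAsm A ∧ ∀ i j, A i j = A j i ∧ A i j = A j.rev i.rev

/-- The set of `(2n+1) × (2n+1)` DASASMs. -/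
def dasasmSet (n : ℕ) : Set (Matrix (Fin (2*n+1)) (Fin (2*n+1)) ℤ) := {A | IsDasasm A}

set_option maxHeartbeats 2000000

namespace TD
open Finset
variable {k : ℕ}

def c0 (k : ℕ) : Fin (2*(k+1)+1) := ⟨k, by omega⟩
def c1 (k : ℕ) : Fin (2*(k+1)+1) := ⟨k+1, by omega⟩
def c2 (k : ℕ) : Fin (2*(k+1)+1) := ⟨k+2, by omega⟩

abbrev MM (k : ℕ) := Matrix (Fin (2*(k+1)+1)) (Fin (2*(k+1)+1)) ℤ

lemma rev_c0 : (c0 k).rev = c2 k := by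
  ext; rw [Fin.val_rev]; simp [c0, c2]; omega
lemma rev_c1 : (c1 k).rev = c1 k := by
  ext; rw [Fin.val_rev]; simp [c1]; omega
lemma rev_c2 : (c2 k).rev = c0 k := by
  ext; rw [Fin.val_rev]; simp [c0, c2]; omega

lemma sum_univ_split (t : Fin (2*(k+1)+1)) (g : Fin (2*(k+1)+1) → ℤ) :
    ∑ j, g j = (∑ j ∈ Iic t, g j) + ∑ j ∈ Ioi t, g j := by
  rw [← Finset.sum_union (by
    simp only [Finset.disjoint_left, Finset.mem_Iic, Finset.mem_Ioi, Fin.le_def, Fin.lt_def]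
    omega)]
  congr 1
  ext j
  simp only [Finset.mem_univ, Finset.mem_union, Finset.mem_Iic, Finset.mem_Ioi,
    Fin.le_def, Fin.lt_def, true_iff]
  omega

lemma Iic_split {t u : Fin (2*(k+1)+1)} (h : t ≤ u) :
    Iic u = Iic t ∪ Ioc t u := by
  ext j
  rw [Fin.le_def] at h
  simp only [Finset.mem_Iic, Finset.mem_union, Finset.mem_Ioc, Fin.le_def, Fin.lt_def]
  omega

lemma disj_Iic_Ioc {t u : Fin (2*(k+1)+1)} :
    Disjoint (Iic t) (Ioc t u) := by
  simp only [Finset.disjoint_left, Finset.mem_Iic, Finset.mem_Ioc, Fin.le_def, Fin.lt_def]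
  omega

lemma sum_rev (t : Fin (2*(k+1)+1)) (g : Fin (2*(k+1)+1) → ℤ) :
    ∑ j ∈ Ioi t, g j = ∑ j ∈ Iio t.rev, g j.rev := by
  refine Finset.sum_nbij' Fin.rev Fin.rev ?_ ?_ ?_ ?_ ?_ <;>
    intro a ha <;>
    simp only [Finset.mem_Ioi, Finset.mem_Iio, Fin.lt_def, Fin.val_rev, Fin.rev_rev] at * <;>
    omega

lemma Iio_c1 : (Iio (c1 k)) = insert (c0 k) (Iio (c0 k)) := by
  ext j
  simp only [Finset.mem_Iio, Finset.mem_insert, Fin.lt_def, Fin.ext_iff, c0, c1]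
  omega

lemma Iio_c2 : (Iio (c2 k)) = insert (c1 k) (Iio (c1 k)) := by
  ext j
  simp only [Finset.mem_Iio, Finset.mem_insert, Fin.lt_def, Fin.ext_iff, c1, c2]
  omega

lemma Iic_eq_insert (t : Fin (2*(k+1)+1)) : Iic t = insert t (Iio t) :=
  (Finset.Iio_insert t).symm

-- partial sum decomposition lemmas
lemma PS_c0 (g : Fin (2*(k+1)+1) → ℤ) :
    ∑ j ∈ Iic (c0 k), g j = (∑ j ∈ Iio (c0 k), g j) + g (c0 k) := by
  rw [Iic_eq_insert, Finset.sum_insert (by simp)]; ring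

lemma PS_c1 (g : Fin (2*(k+1)+1) → ℤ) :
    ∑ j ∈ Iic (c1 k), g j = (∑ j ∈ Iio (c0 k), g j) + g (c0 k) + g (c1 k) := by
  rw [Iic_eq_insert, Iio_c1, Finset.sum_insert, Finset.sum_insert (by simp)]
  · ring
  · simp only [Finset.mem_insert, Finset.mem_Iio, Fin.ext_iff, Fin.lt_def, c0, c1]
    omega

lemma PS_c2 (g : Fin (2*(k+1)+1) → ℤ) :
    ∑ j ∈ Iic (c2 k), g j
      = (∑ j ∈ Iio (c0 k), g j) + g (c0 k) + g (c1 k) + g (c2 k) := by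
  rw [Iic_eq_insert, Iio_c2, Iio_c1, Finset.sum_insert, Finset.sum_insert,
    Finset.sum_insert (by simp)]
  · ring
  · simp only [Finset.mem_insert, Finset.mem_Iio, Fin.ext_iff, Fin.lt_def, c0, c1]
    omega
  · simp only [Finset.mem_insert, Finset.mem_Iio, Fin.ext_iff, Fin.lt_def, c0, c1, c2]
    omega



def upd (A : MM k) (x y z w : ℤ) : MM k := fun i j =>
  if k ≤ i.val ∧ i.val ≤ k+2 ∧ k ≤ j.val ∧ j.val ≤ k+2 then
    (if (i.val + j.val) % 2 = 1 then y
     else if i.val = k+1 then w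
     else if i.val = j.val then x else z)
  else A i j

lemma upd_of_col {A : MM k} {x y z w : ℤ} {i j : Fin (2*(k+1)+1)}
    (h0 : j ≠ c0 k) (h1 : j ≠ c1 k) (h2 : j ≠ c2 k) : upd A x y z w i j = A i j := by
  have h0' : j.val ≠ k := fun h => h0 (Fin.ext h)
  have h1' : j.val ≠ k+1 := fun h => h1 (Fin.ext h)
  have h2' : j.val ≠ k+2 := fun h => h2 (Fin.ext h)
  unfold upd
  split_ifs <;> first | rfl | (exfalso; omega)

lemma upd_of_row {A : MM k} {x y z w : ℤ} {i j : Fin (2*(k+1)+1)}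
    (h0 : i ≠ c0 k) (h1 : i ≠ c1 k) (h2 : i ≠ c2 k) : upd A x y z w i j = A i j := by
  have h0' : i.val ≠ k := fun h => h0 (Fin.ext h)
  have h1' : i.val ≠ k+1 := fun h => h1 (Fin.ext h)
  have h2' : i.val ≠ k+2 := fun h => h2 (Fin.ext h)
  unfold upd
  split_ifs <;> first | rfl | (exfalso; omega)

lemma upd_00 {A : MM k} {x y z w : ℤ} : upd A x y z w (c0 k) (c0 k) = x := by
  show (if _ then _ else _) = x
  simp only [c0]
  split_ifs <;> first | rfl | (exfalso; omega)
lemma upd_01 {A : MM k} {x y z w : ℤ} : upd A x y z w (c0 k) (c1 k) = y := by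
  show (if _ then _ else _) = y
  simp only [c0, c1]
  simp; omega
lemma upd_02 {A : MM k} {x y z w : ℤ} : upd A x y z w (c0 k) (c2 k) = z := by
  show (if _ then _ else _) = z
  simp only [c0, c2]
  simp; omega
lemma upd_10 {A : MM k} {x y z w : ℤ} : upd A x y z w (c1 k) (c0 k) = y := by
  show (if _ then _ else _) = y
  simp only [c0, c1]
  split_ifs <;> first | rfl | (exfalso; omega)
lemma upd_11 {A : MM k} {x y z w : ℤ} : upd A x y z w (c1 k) (c1 k) = w := by
  show (if _ then _ else _) = w
  simp only [c1]
  split_ifs <;> first | rfl | (exfalso; omega)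
lemma upd_12 {A : MM k} {x y z w : ℤ} : upd A x y z w (c1 k) (c2 k) = y := by
  show (if _ then _ else _) = y
  simp only [c1, c2]
  split_ifs <;> first | rfl | (exfalso; omega)
lemma upd_20 {A : MM k} {x y z w : ℤ} : upd A x y z w (c2 k) (c0 k) = z := by
  show (if _ then _ else _) = z
  simp only [c0, c2]
  simp; omega
lemma upd_21 {A : MM k} {x y z w : ℤ} : upd A x y z w (c2 k) (c1 k) = y := by
  show (if _ then _ else _) = y
  simp only [c1, c2]
  simp; omega
lemma upd_22 {A : MM k} {x y z w : ℤ} : upd A x y z w (c2 k) (c2 k) = x := by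
  show (if _ then _ else _) = x
  simp only [c2]
  split_ifs <;> first | rfl | (exfalso; omega)

lemma upd_symm {A : MM k} {x y z w : ℤ} (hs : ∀ i j, A i j = A j i) (i j : Fin (2*(k+1)+1)) :
    upd A x y z w i j = upd A x y z w j i := by
  unfold upd
  split_ifs <;> first | rfl | (exfalso; omega) | exact hs i j

lemma upd_anti {A : MM k} {x y z w : ℤ} (ha : ∀ i j, A i j = A j.rev i.rev)
    (i j : Fin (2*(k+1)+1)) :
    upd A x y z w i j = upd A x y z w j.rev i.rev := by
  have hi := i.isLt
  have hj := j.isLt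
  unfold upd
  rw [Fin.val_rev, Fin.val_rev]
  split_ifs <;> first | rfl | (exfalso; omega) | exact ha i j

def pval (A : MM k) : ℤ := ∑ j ∈ Iio (c0 k), A (c0 k) j
def qval (A : MM k) : ℤ := ∑ j ∈ Iio (c0 k), A (c1 k) j
def rval (A : MM k) : ℤ := ∑ j ∈ Ioi (c2 k), A (c0 k) j

def Good (p q r x y z w : ℤ) : Prop :=
  (p + x = 0 ∨ p + x = 1) ∧ (p + x + y = 0 ∨ p + x + y = 1) ∧ p + x + y + z = 1 - r ∧
  (q + y = 0 ∨ q + y = 1) ∧ w = 1 - 2*(q + y) ∧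
  (x = -1 ∨ x = 0 ∨ x = 1) ∧ (y = -1 ∨ y = 0 ∨ y = 1) ∧ (z = -1 ∨ z = 0 ∨ z = 1)

lemma row_Iio {A : MM k} (h : IsAsm A) (i t : Fin (2*(k+1)+1)) :
    (∑ j ∈ Iio t, A i j) = 0 ∨ (∑ j ∈ Iio t, A i j) = 1 := by
  obtain ⟨tv, ht⟩ := t
  match tv with
  | 0 =>
    left
    have he : (Iio (⟨0, ht⟩ : Fin (2*(k+1)+1))) = ∅ := by
      ext j
      simp [Fin.lt_def]
    rw [he, Finset.sum_empty]
  | v+1 =>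
    have he : (Iio (⟨v+1, ht⟩ : Fin (2*(k+1)+1))) = Iic ⟨v, by omega⟩ := by
      ext j
      simp [Fin.lt_def, Fin.le_def, Nat.lt_succ_iff]
    rw [he]
    exact h.2.1 i _

section withA
variable {A : MM k}

lemma hsymm (h : IsDasasm A) : ∀ i j, A i j = A j i := fun i j => (h.2 i j).1
lemma hanti (h : IsDasasm A) : ∀ i j, A i j = A j.rev i.rev := fun i j => (h.2 i j).2

lemma center_palin (h : IsDasasm A) (j : Fin (2*(k+1)+1)) : A (c1 k) j.rev = A (c1 k) j := by
  rw [hanti h (c1 k) j.rev, Fin.rev_rev, rev_c1, hsymm h]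

lemma row2_row0 (h : IsDasasm A) (j : Fin (2*(k+1)+1)) : A (c2 k) j = A (c0 k) j.rev := by
  rw [hsymm h (c2 k) j, hanti h j (c2 k), rev_c2]

lemma pval_mem (h : IsDasasm A) : pval A = 0 ∨ pval A = 1 := row_Iio h.1 _ _
lemma qval_mem (h : IsDasasm A) : qval A = 0 ∨ qval A = 1 := row_Iio h.1 _ _

lemma row0_c2 (h : IsDasasm A) : (∑ j ∈ Iic (c2 k), A (c0 k) j) = 1 - rval A := by
  have := sum_univ_split (c2 k) (A (c0 k))
  rw [h.1.2.2.1 (c0 k)] at this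
  unfold rval
  omega

lemma rval_mem (h : IsDasasm A) : rval A = 0 ∨ rval A = 1 := by
  have h1 := h.1.2.1 (c0 k) (c2 k)
  rw [row0_c2 h] at h1
  omega

lemma tail_row1 (h : IsDasasm A) : (∑ j ∈ Ioi (c1 k), A (c1 k) j) = qval A + A (c0 k) (c1 k) := by
  rw [sum_rev, rev_c1]
  rw [Finset.sum_congr rfl (fun j _ => center_palin h j), Iio_c1,
    Finset.sum_insert (by simp)]
  rw [hsymm h (c1 k) (c0 k)]
  unfold qval
  ring

lemma good_self (h : IsDasasm A) :
    Good (pval A) (qval A) (rval A)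
      (A (c0 k) (c0 k)) (A (c0 k) (c1 k)) (A (c0 k) (c2 k)) (A (c1 k) (c1 k)) := by
  have e0 : (∑ j ∈ Iic (c0 k), A (c0 k) j) = pval A + A (c0 k) (c0 k) := PS_c0 _
  have e1 : (∑ j ∈ Iic (c1 k), A (c0 k) j)
      = pval A + A (c0 k) (c0 k) + A (c0 k) (c1 k) := PS_c1 _
  have e2 : (∑ j ∈ Iic (c2 k), A (c0 k) j)
      = pval A + A (c0 k) (c0 k) + A (c0 k) (c1 k) + A (c0 k) (c2 k) := PS_c2 _
  have f0 : (∑ j ∈ Iic (c0 k), A (c1 k) j) = qval A + A (c0 k) (c1 k) := by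
    rw [PS_c0, hsymm h (c1 k) (c0 k)]
    unfold qval
    ring
  have f1 : (∑ j ∈ Iic (c1 k), A (c1 k) j)
      = qval A + A (c0 k) (c1 k) + A (c1 k) (c1 k) := by
    rw [PS_c1, hsymm h (c1 k) (c0 k)]
    unfold qval
    ring
  have hr0 := h.1.2.1 (c0 k) (c0 k)
  have hr1 := h.1.2.1 (c0 k) (c1 k)
  have hr2 := row0_c2 h
  have hq0 := h.1.2.1 (c1 k) (c0 k)
  have hrow1 := h.1.2.2.1 (c1 k)
  have hsplit := sum_univ_split (c1 k) (A (c1 k))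
  rw [hrow1, f1, tail_row1 h] at hsplit
  rw [e0] at hr0
  rw [e1] at hr1
  rw [e2] at hr2
  rw [f0] at hq0
  refine ⟨hr0, hr1, by omega, hq0, by omega, h.1.1 _ _, h.1.1 _ _, h.1.1 _ _⟩

end withA

@[simp] lemma val_c0 : (c0 k).val = k := rfl
@[simp] lemma val_c1 : (c1 k).val = k+1 := rfl
@[simp] lemma val_c2 : (c2 k).val = k+2 := rfl

section preserve
variable {A : MM k} {x y z w : ℤ}

lemma pval_def (A : MM k) : ∑ j ∈ Iio (c0 k), A (c0 k) j = pval A := rfl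
lemma qval_def (A : MM k) : ∑ j ∈ Iio (c0 k), A (c1 k) j = qval A := rfl

lemma prefix_unchanged (A : MM k) (x y z w : ℤ) (i : Fin (2*(k+1)+1)) :
    ∑ j ∈ Iio (c0 k), upd A x y z w i j = ∑ j ∈ Iio (c0 k), A i j := by
  refine Finset.sum_congr rfl fun j hj => ?_
  have hjv : j.val < k := by simpa [Fin.lt_def] using hj
  exact upd_of_col (Fin.ne_of_val_ne (by simp; omega))
    (Fin.ne_of_val_ne (by simp; omega)) (Fin.ne_of_val_ne (by simp; omega))

lemma tail_unchanged (A : MM k) (x y z w : ℤ) (i : Fin (2*(k+1)+1)) :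
    ∑ j ∈ Ioi (c2 k), upd A x y z w i j = ∑ j ∈ Ioi (c2 k), A i j := by
  refine Finset.sum_congr rfl fun j hj => ?_
  have hjv : k+2 < j.val := by simpa [Fin.lt_def] using hj
  exact upd_of_col (Fin.ne_of_val_ne (by simp; omega))
    (Fin.ne_of_val_ne (by simp; omega)) (Fin.ne_of_val_ne (by simp; omega))

lemma low_sum_unchanged (A : MM k) (x y z w : ℤ) (i t : Fin (2*(k+1)+1))
    (hlt : t.val < k) :
    ∑ j ∈ Iic t, upd A x y z w i j = ∑ j ∈ Iic t, A i j := by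
  refine Finset.sum_congr rfl fun j hj => ?_
  have hjv : j.val ≤ t.val := Fin.le_def.mp (Finset.mem_Iic.mp hj)
  exact upd_of_col (Fin.ne_of_val_ne (by simp; omega))
    (Fin.ne_of_val_ne (by simp; omega)) (Fin.ne_of_val_ne (by simp; omega))

lemma prefix_row2 (h : IsDasasm A) :
    ∑ j ∈ Iio (c0 k), A (c2 k) j = rval A := by
  have h1 : rval A = ∑ j ∈ Iio (c0 k), A (c0 k) j.rev := by
    rw [rval, sum_rev, rev_c2]
  rw [h1]
  exact Finset.sum_congr rfl fun j _ => row2_row0 h j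

lemma tail_row1' (h : IsDasasm A) :
    ∑ j ∈ Ioi (c2 k), A (c1 k) j = qval A := by
  calc ∑ j ∈ Ioi (c2 k), A (c1 k) j
      = ∑ j ∈ Iio (c0 k), A (c1 k) j.rev := by rw [sum_rev, rev_c2]
    _ = ∑ j ∈ Iio (c0 k), A (c1 k) j := Finset.sum_congr rfl fun j _ => center_palin h j
    _ = qval A := rfl

lemma tail_row2 (h : IsDasasm A) :
    ∑ j ∈ Ioi (c2 k), A (c2 k) j = pval A := by
  calc ∑ j ∈ Ioi (c2 k), A (c2 k) j
      = ∑ j ∈ Iio (c0 k), A (c2 k) j.rev := by rw [sum_rev, rev_c2]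
    _ = ∑ j ∈ Iio (c0 k), A (c0 k) j := by
        refine Finset.sum_congr rfl fun j _ => ?_
        rw [row2_row0 h, Fin.rev_rev]
    _ = pval A := rfl

lemma row1_c2 (h : IsDasasm A) :
    (∑ j ∈ Iic (c2 k), A (c1 k) j) = 1 - qval A := by
  have := sum_univ_split (c2 k) (A (c1 k))
  rw [h.1.2.2.1 (c1 k), tail_row1' h] at this
  omega

lemma row2_c2 (h : IsDasasm A) :
    (∑ j ∈ Iic (c2 k), A (c2 k) j) = 1 - pval A := by
  have := sum_univ_split (c2 k) (A (c2 k))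
  rw [h.1.2.2.1 (c2 k), tail_row2 h] at this
  omega

lemma t_cases (t : Fin (2*(k+1)+1)) (hge : k ≤ t.val) :
    t = c0 k ∨ t = c1 k ∨ t = c2 k ∨ k+2 < t.val := by
  rcases Nat.lt_or_ge (k+2) t.val with hbig | hle
  · exact Or.inr (Or.inr (Or.inr hbig))
  rcases Nat.lt_or_ge t.val (k+1) with h1 | h1
  · exact Or.inl (Fin.ext (by simp; omega))
  rcases Nat.lt_or_ge t.val (k+2) with h2 | h2
  · exact Or.inr (Or.inl (Fin.ext (by simp; omega)))
  · exact Or.inr (Or.inr (Or.inl (Fin.ext (by simp; omega))))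

lemma high_sum (A : MM k) (x y z w : ℤ) (i t : Fin (2*(k+1)+1)) (hbig : k+2 < t.val)
    (he : ∑ j ∈ Iic (c2 k), upd A x y z w i j = ∑ j ∈ Iic (c2 k), A i j) :
    ∑ j ∈ Iic t, upd A x y z w i j = ∑ j ∈ Iic t, A i j := by
  have hle : c2 k ≤ t := by rw [Fin.le_def]; simp; omega
  rw [Iic_split hle, Finset.sum_union disj_Iic_Ioc, Finset.sum_union disj_Iic_Ioc, he]
  congr 1
  refine Finset.sum_congr rfl fun j hj => ?_
  have hjv : k+2 < j.val := by
    have := (Finset.mem_Ioc.mp hj).1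
    simpa [Fin.lt_def] using this
  exact upd_of_col (Fin.ne_of_val_ne (by simp; omega))
    (Fin.ne_of_val_ne (by simp; omega)) (Fin.ne_of_val_ne (by simp; omega))

lemma preserve (h : IsDasasm A)
    (G : Good (pval A) (qval A) (rval A) x y z w) : IsDasasm (upd A x y z w) := by
  obtain ⟨g1, g2, g3, g4, g5, gx, gy, gz⟩ := G
  have hp := pval_mem h
  have hq := qval_mem h
  have hr := rval_mem h
  have Bsym : ∀ i j, upd A x y z w i j = upd A x y z w j i := upd_symm (hsymm h)
  have Banti : ∀ i j, upd A x y z w i j = upd A x y z w j.rev i.rev :=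
    upd_anti (hanti h)
  have BR0 : ∑ j ∈ Iic (c2 k), upd A x y z w (c0 k) j = 1 - rval A := by
    rw [PS_c2, prefix_unchanged, pval_def, upd_00, upd_01, upd_02]; omega
  have BR1 : ∑ j ∈ Iic (c2 k), upd A x y z w (c1 k) j = 1 - qval A := by
    rw [PS_c2, prefix_unchanged, qval_def, upd_10, upd_11, upd_12]; omega
  have BR2 : ∑ j ∈ Iic (c2 k), upd A x y z w (c2 k) j = 1 - pval A := by
    rw [PS_c2, prefix_unchanged, prefix_row2 h, upd_20, upd_21, upd_22]; omega
  have rowpart : ∀ i t : Fin (2*(k+1)+1),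
      (∑ j ∈ Iic t, upd A x y z w i j) = 0 ∨ (∑ j ∈ Iic t, upd A x y z w i j) = 1 := by
    intro i t
    by_cases hi0 : i = c0 k
    · subst hi0
      rcases Nat.lt_or_ge t.val k with hlt | hge
      · rw [low_sum_unchanged A x y z w _ t hlt]; exact h.1.2.1 _ t
      rcases t_cases t hge with rfl | rfl | rfl | hbig
      · rw [PS_c0, prefix_unchanged, pval_def, upd_00]; omega
      · rw [PS_c1, prefix_unchanged, pval_def, upd_00, upd_01]; omega
      · rw [BR0]; omega
      · rw [high_sum A x y z w _ t hbig (by rw [BR0, row0_c2 h])]; exact h.1.2.1 _ t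
    by_cases hi1 : i = c1 k
    · subst hi1
      rcases Nat.lt_or_ge t.val k with hlt | hge
      · rw [low_sum_unchanged A x y z w _ t hlt]; exact h.1.2.1 _ t
      rcases t_cases t hge with rfl | rfl | rfl | hbig
      · rw [PS_c0, prefix_unchanged, qval_def, upd_10]; omega
      · rw [PS_c1, prefix_unchanged, qval_def, upd_10, upd_11]; omega
      · rw [BR1]; omega
      · rw [high_sum A x y z w _ t hbig (by rw [BR1, row1_c2 h])]; exact h.1.2.1 _ t
    by_cases hi2 : i = c2 k
    · subst hi2
      rcases Nat.lt_or_ge t.val k with hlt | hge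
      · rw [low_sum_unchanged A x y z w _ t hlt]; exact h.1.2.1 _ t
      rcases t_cases t hge with rfl | rfl | rfl | hbig
      · rw [PS_c0, prefix_unchanged, prefix_row2 h, upd_20]; omega
      · rw [PS_c1, prefix_unchanged, prefix_row2 h, upd_20, upd_21]; omega
      · rw [BR2]; omega
      · rw [high_sum A x y z w _ t hbig (by rw [BR2, row2_c2 h])]; exact h.1.2.1 _ t
    · rw [Finset.sum_congr rfl fun j _ => upd_of_row hi0 hi1 hi2]
      exact h.1.2.1 i t
  have rowtot : ∀ i, (∑ j, upd A x y z w i j) = 1 := by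
    intro i
    by_cases hi0 : i = c0 k
    · subst hi0
      rw [sum_univ_split (c2 k), tail_unchanged, BR0]
      rw [rval] at *
      omega
    by_cases hi1 : i = c1 k
    · subst hi1
      rw [sum_univ_split (c2 k), tail_unchanged, BR1, tail_row1' h]
      omega
    by_cases hi2 : i = c2 k
    · subst hi2
      rw [sum_univ_split (c2 k), tail_unchanged, BR2, tail_row2 h]
      omega
    · rw [Finset.sum_congr rfl fun j _ => upd_of_row hi0 hi1 hi2]
      exact h.1.2.2.1 i
  have colpart : ∀ j t : Fin (2*(k+1)+1),
      (∑ i ∈ Iic t, upd A x y z w i j) = 0 ∨ (∑ i ∈ Iic t, upd A x y z w i j) = 1 := by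
    intro j t
    rw [Finset.sum_congr rfl fun i _ => Bsym i j]
    exact rowpart j t
  have coltot : ∀ j, (∑ i, upd A x y z w i j) = 1 := by
    intro j
    rw [Finset.sum_congr rfl fun i _ => Bsym i j]
    exact rowtot j
  have hrange : ∀ i j, upd A x y z w i j = -1 ∨ upd A x y z w i j = 0 ∨
      upd A x y z w i j = 1 := by
    intro i j
    unfold upd
    split_ifs
    · omega
    · omega
    · omega
    · omega
    · exact h.1.1 i j
  exact ⟨⟨hrange, rowpart, rowtot, colpart, coltot⟩, fun i j => ⟨Bsym i j, Banti i j⟩⟩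

end preserve

section sigma
variable {A : MM k}

def quadF (A : MM k) : ℤ×ℤ×ℤ×ℤ :=
  (A (c0 k) (c0 k), A (c0 k) (c1 k), A (c0 k) (c2 k), A (c1 k) (c1 k))

def qA (p q r : ℤ) : ℤ×ℤ×ℤ×ℤ := (-p, 0, 1-r, 1-2*q)
def qB (p q r : ℤ) : ℤ×ℤ×ℤ×ℤ := (1-p, 0, -r, 1-2*q)
def qC (p q r : ℤ) : ℤ×ℤ×ℤ×ℤ := (q-p, 1-2*q, q-r, 2*q-1)

def updT (A : MM k) (t : ℤ×ℤ×ℤ×ℤ) : MM k := upd A t.1 t.2.1 t.2.2.1 t.2.2.2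

lemma pval_updT (t : ℤ×ℤ×ℤ×ℤ) : pval (updT A t) = pval A :=
  prefix_unchanged A t.1 t.2.1 t.2.2.1 t.2.2.2 (c0 k)
lemma qval_updT (t : ℤ×ℤ×ℤ×ℤ) : qval (updT A t) = qval A :=
  prefix_unchanged A t.1 t.2.1 t.2.2.1 t.2.2.2 (c1 k)
lemma rval_updT (t : ℤ×ℤ×ℤ×ℤ) : rval (updT A t) = rval A :=
  tail_unchanged A t.1 t.2.1 t.2.2.1 t.2.2.2 (c0 k)

lemma quadF_updT (t : ℤ×ℤ×ℤ×ℤ) : quadF (updT A t) = t := by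
  obtain ⟨x, y, z, w⟩ := t
  simp [quadF, updT, upd_00, upd_01, upd_02, upd_11]

lemma updT_updT (s t : ℤ×ℤ×ℤ×ℤ) : updT (updT A s) t = updT A t := by
  funext i j
  show (if _ then _ else (if _ then _ else A i j)) = (if _ then _ else A i j)
  split_ifs <;> rfl

lemma preserveT (h : IsDasasm A) (t : ℤ×ℤ×ℤ×ℤ)
    (G : Good (pval A) (qval A) (rval A) t.1 t.2.1 t.2.2.1 t.2.2.2) :
    IsDasasm (updT A t) := preserve h G

lemma eq_c0_of_val {i : Fin (2*(k+1)+1)} (h : i.val = k) : i = c0 k := Fin.ext h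
lemma eq_c1_of_val {i : Fin (2*(k+1)+1)} (h : i.val = k+1) : i = c1 k := Fin.ext h
lemma eq_c2_of_val {i : Fin (2*(k+1)+1)} (h : i.val = k+2) : i = c2 k := Fin.ext h

lemma updT_quadF_self (h : IsDasasm A) : updT A (quadF A) = A := by
  funext i j
  have hiv := i.isLt
  have hjv := j.isLt
  show (if _ then _ else A i j) = A i j
  split_ifs with hc h1 h2 h3
  · -- y-value: A (c0 k) (c1 k) = A i j, (i+j) odd in block
    have hij : (i.val = k ∧ j.val = k+1) ∨ (i.val = k+1 ∧ j.val = k) ∨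
        (i.val = k+1 ∧ j.val = k+2) ∨ (i.val = k+2 ∧ j.val = k+1) := by omega
    have key : A (c1 k) (c2 k) = A (c0 k) (c1 k) := by
      rw [hanti h (c1 k) (c2 k), rev_c2, rev_c1]
    rcases hij with ⟨e1, e2⟩ | ⟨e1, e2⟩ | ⟨e1, e2⟩ | ⟨e1, e2⟩
    · rw [eq_c0_of_val e1, eq_c1_of_val e2]; rfl
    · rw [eq_c1_of_val e1, eq_c0_of_val e2]
      exact hsymm h (c0 k) (c1 k)
    · rw [eq_c1_of_val e1, eq_c2_of_val e2]
      exact key.symm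
    · rw [eq_c2_of_val e1, eq_c1_of_val e2, hsymm h (c2 k) (c1 k)]
      exact key.symm
  · -- w-value: i = c1, j = c1
    have e2 : j.val = k+1 := by omega
    rw [eq_c1_of_val h2, eq_c1_of_val e2]; rfl
  · -- x-value: diagonal
    have hij : (i.val = k ∧ j.val = k) ∨ (i.val = k+2 ∧ j.val = k+2) := by omega
    rcases hij with ⟨e1, e2⟩ | ⟨e1, e2⟩
    · rw [eq_c0_of_val e1, eq_c0_of_val e2]; rfl
    · rw [eq_c2_of_val e1, eq_c2_of_val e2]
      exact (by rw [hanti h (c2 k) (c2 k), rev_c2] :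
        A (c2 k) (c2 k) = A (c0 k) (c0 k)).symm
  · -- z-value: antidiagonal corners
    have hij : (i.val = k ∧ j.val = k+2) ∨ (i.val = k+2 ∧ j.val = k) := by omega
    rcases hij with ⟨e1, e2⟩ | ⟨e1, e2⟩
    · rw [eq_c0_of_val e1, eq_c2_of_val e2]; rfl
    · rw [eq_c2_of_val e1, eq_c0_of_val e2]
      exact (hsymm h (c2 k) (c0 k)).symm
  · rfl

lemma goodA {p q r : ℤ} (hp : p = 0 ∨ p = 1) (hq : q = 0 ∨ q = 1) (hr : r = 0 ∨ r = 1) :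
    Good p q r (qA p q r).1 (qA p q r).2.1 (qA p q r).2.2.1 (qA p q r).2.2.2 := by
  show Good p q r (-p) 0 (1-r) (1-2*q)
  exact ⟨by omega, by omega, by omega, by omega, by omega, by omega, by omega, by omega⟩

lemma goodB {p q r : ℤ} (hp : p = 0 ∨ p = 1) (hq : q = 0 ∨ q = 1) (hr : r = 0 ∨ r = 1) :
    Good p q r (qB p q r).1 (qB p q r).2.1 (qB p q r).2.2.1 (qB p q r).2.2.2 := by
  show Good p q r (1-p) 0 (-r) (1-2*q)
  exact ⟨by omega, by omega, by omega, by omega, by omega, by omega, by omega, by omega⟩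

lemma goodC {p q r : ℤ} (hp : p = 0 ∨ p = 1) (hq : q = 0 ∨ q = 1) (hr : r = 0 ∨ r = 1) :
    Good p q r (qC p q r).1 (qC p q r).2.1 (qC p q r).2.2.1 (qC p q r).2.2.2 := by
  show Good p q r (q-p) (1-2*q) (q-r) (2*q-1)
  exact ⟨by omega, by omega, by omega, by omega, by omega, by omega, by omega, by omega⟩

lemma classify (h : IsDasasm A) :
    quadF A = qA (pval A) (qval A) (rval A) ∨
    quadF A = qB (pval A) (qval A) (rval A) ∨
    quadF A = qC (pval A) (qval A) (rval A) := by
  have hp := pval_mem h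
  have hq := qval_mem h
  have hr := rval_mem h
  obtain ⟨g1, g2, g3, g4, g5, gx, gy, gz⟩ := good_self h
  simp only [quadF, qA, qB, qC, Prod.mk.injEq]
  omega

def sig (A : MM k) : MM k :=
  if quadF A = qA (pval A) (qval A) (rval A) then
    updT A (qB (pval A) (qval A) (rval A))
  else if quadF A = qB (pval A) (qval A) (rval A) then
    updT A (qC (pval A) (qval A) (rval A))
  else if quadF A = qC (pval A) (qval A) (rval A) then
    updT A (qA (pval A) (qval A) (rval A))
  else A

lemma neAB {p q r : ℤ} : qA p q r ≠ qB p q r := by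
  simp only [qA, qB, ne_eq, Prod.mk.injEq]
  omega

lemma neAC {p q r : ℤ} (hq : q = 0 ∨ q = 1) : qA p q r ≠ qC p q r := by
  simp only [qA, qC, ne_eq, Prod.mk.injEq]
  omega

lemma neBC {p q r : ℤ} (hq : q = 0 ∨ q = 1) : qB p q r ≠ qC p q r := by
  simp only [qB, qC, ne_eq, Prod.mk.injEq]
  omega

lemma sig_eq_of_quad {t u : ℤ×ℤ×ℤ×ℤ}
    (hq : quadF A = t)
    (hcA : (t = qA (pval A) (qval A) (rval A)) → u = qB (pval A) (qval A) (rval A))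
    (hcB : t ≠ qA (pval A) (qval A) (rval A) →
      t = qB (pval A) (qval A) (rval A) → u = qC (pval A) (qval A) (rval A))
    (hcC : t ≠ qA (pval A) (qval A) (rval A) →
      t ≠ qB (pval A) (qval A) (rval A) →
      t = qC (pval A) (qval A) (rval A) → u = qA (pval A) (qval A) (rval A))
    (hne : t ≠ qA (pval A) (qval A) (rval A) →
      t ≠ qB (pval A) (qval A) (rval A) →
      t ≠ qC (pval A) (qval A) (rval A) → False) :
    sig A = updT A u := by
  unfold sig
  rw [hq]
  by_cases h1 : t = qA (pval A) (qval A) (rval A)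
  · rw [if_pos h1, hcA h1]
  by_cases h2 : t = qB (pval A) (qval A) (rval A)
  · rw [if_neg h1, if_pos h2, hcB h1 h2]
  by_cases h3 : t = qC (pval A) (qval A) (rval A)
  · rw [if_neg h1, if_neg h2, if_pos h3, hcC h1 h2 h3]
  · exact absurd (hne h1 h2 h3) not_false

end sigma

section cycle
variable {A : MM k}

lemma sig_cases (h : IsDasasm A) :
    (quadF A = qA (pval A) (qval A) (rval A) ∧
      sig A = updT A (qB (pval A) (qval A) (rval A))) ∨
    (quadF A = qB (pval A) (qval A) (rval A) ∧
      sig A = updT A (qC (pval A) (qval A) (rval A))) ∨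
    (quadF A = qC (pval A) (qval A) (rval A) ∧
      sig A = updT A (qA (pval A) (qval A) (rval A))) := by
  have hq := qval_mem h
  rcases classify h with h1 | h2 | h3
  · exact Or.inl ⟨h1, by unfold sig; rw [if_pos h1]⟩
  · refine Or.inr (Or.inl ⟨h2, ?_⟩)
    unfold sig
    rw [if_neg (fun hcon => neAB (hcon.symm.trans h2)), if_pos h2]
  · refine Or.inr (Or.inr ⟨h3, ?_⟩)
    unfold sig
    rw [if_neg (fun hcon => neAC hq (hcon.symm.trans h3)),
      if_neg (fun hcon => neBC hq (hcon.symm.trans h3)), if_pos h3]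

lemma sig_mem (h : IsDasasm A) : IsDasasm (sig A) := by
  have hp := pval_mem h
  have hq := qval_mem h
  have hr := rval_mem h
  rcases sig_cases h with ⟨_, e⟩ | ⟨_, e⟩ | ⟨_, e⟩ <;> rw [e]
  exacts [preserveT h _ (goodB hp hq hr), preserveT h _ (goodC hp hq hr),
    preserveT h _ (goodA hp hq hr)]

lemma sig_of_updT_A (h : IsDasasm A) :
    sig (updT A (qA (pval A) (qval A) (rval A)))
      = updT A (qB (pval A) (qval A) (rval A)) := by
  unfold sig
  rw [quadF_updT, pval_updT, qval_updT, rval_updT, if_pos rfl, updT_updT]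

lemma sig_of_updT_B (h : IsDasasm A) :
    sig (updT A (qB (pval A) (qval A) (rval A)))
      = updT A (qC (pval A) (qval A) (rval A)) := by
  unfold sig
  rw [quadF_updT, pval_updT, qval_updT, rval_updT, if_neg (Ne.symm neAB),
    if_pos rfl, updT_updT]

lemma sig_of_updT_C (h : IsDasasm A) :
    sig (updT A (qC (pval A) (qval A) (rval A)))
      = updT A (qA (pval A) (qval A) (rval A)) := by
  have hq := qval_mem h
  unfold sig
  rw [quadF_updT, pval_updT, qval_updT, rval_updT, if_neg (Ne.symm (neAC hq)),
    if_neg (Ne.symm (neBC hq)), if_pos rfl, updT_updT]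

lemma sig_sig_sig (h : IsDasasm A) : sig (sig (sig A)) = A := by
  rcases sig_cases h with ⟨hquad, e⟩ | ⟨hquad, e⟩ | ⟨hquad, e⟩
  · rw [e, sig_of_updT_B h, sig_of_updT_C h, ← hquad, updT_quadF_self h]
  · rw [e, sig_of_updT_C h, sig_of_updT_A h, ← hquad, updT_quadF_self h]
  · rw [e, sig_of_updT_A h, sig_of_updT_B h, ← hquad, updT_quadF_self h]

lemma sig_ne (h : IsDasasm A) : sig A ≠ A := by
  have hq := qval_mem h
  rcases sig_cases h with ⟨hquad, e⟩ | ⟨hquad, e⟩ | ⟨hquad, e⟩ <;> intro hcon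
  · have h2 := quadF_updT (A := A) (qB (pval A) (qval A) (rval A))
    rw [← e, hcon] at h2
    exact neAB (hquad.symm.trans h2)
  · have h2 := quadF_updT (A := A) (qC (pval A) (qval A) (rval A))
    rw [← e, hcon] at h2
    exact neBC hq (hquad.symm.trans h2)
  · have h2 := quadF_updT (A := A) (qA (pval A) (qval A) (rval A))
    rw [← e, hcon] at h2
    exact neAC hq (h2.symm.trans hquad)

end cycle

lemma card_lemma {α : Type*} (f : α → α) :
    ∀ s : Finset α, (∀ x ∈ s, f x ∈ s) → (∀ x ∈ s, f (f (f x)) = x) →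
      (∀ x ∈ s, f x ≠ x) → 3 ∣ s.card := by
  classical
  intro s
  induction s using Finset.strongInduction with
  | _ s ih =>
    intro hmap h3 hne
    rcases s.eq_empty_or_nonempty with rfl | ⟨a, ha⟩
    · simp
    have hfa : f a ∈ s := hmap a ha
    have hffa : f (f a) ∈ s := hmap _ hfa
    have n1 : f a ≠ a := hne a ha
    have n2 : f (f a) ≠ a := by
      intro hcon
      have h3a := h3 a ha
      rw [hcon] at h3a
      exact n1 h3a
    have n3 : f (f a) ≠ f a := by
      intro hcon
      have h3a := h3 a ha
      rw [hcon] at h3a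
      exact n2 h3a
    have hsub : ({a, f a, f (f a)} : Finset α) ⊆ s := by
      intro u hu
      simp only [Finset.mem_insert, Finset.mem_singleton] at hu
      rcases hu with rfl | rfl | rfl <;> assumption
    have hcardT : ({a, f a, f (f a)} : Finset α).card = 3 := by
      rw [Finset.card_insert_of_notMem (by
          simp only [Finset.mem_insert, Finset.mem_singleton]
          push_neg
          exact ⟨fun hcon => n1 hcon.symm, fun hcon => n2 hcon.symm⟩),
        Finset.card_insert_of_notMem (by
          simp only [Finset.mem_singleton]
          exact fun hcon => n3 hcon.symm),
        Finset.card_singleton]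
    have hss : s \ ({a, f a, f (f a)} : Finset α) ⊂ s :=
      Finset.sdiff_ssubset hsub ⟨a, by simp⟩
    have hmapt : ∀ x ∈ s \ ({a, f a, f (f a)} : Finset α),
        f x ∈ s \ ({a, f a, f (f a)} : Finset α) := by
      intro u hu
      rw [Finset.mem_sdiff] at hu ⊢
      obtain ⟨hus, hunot⟩ := hu
      simp only [Finset.mem_insert, Finset.mem_singleton] at hunot ⊢
      push_neg at hunot ⊢
      obtain ⟨e1, e2, e3⟩ := hunot
      have hu3 := h3 u hus
      have h3a := h3 a ha
      refine ⟨hmap u hus, ?_, ?_, ?_⟩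
      · intro hcon
        exact e3 (by rw [← hu3, hcon])
      · intro hcon
        exact e1 (by rw [← hu3, hcon, h3a])
      · intro hcon
        exact e2 (by rw [← hu3, hcon, h3a])
    have hdvd := ih (s \ ({a, f a, f (f a)} : Finset α)) hss hmapt
      (fun x hx => h3 x (Finset.mem_sdiff.mp hx).1)
      (fun x hx => hne x (Finset.mem_sdiff.mp hx).1)
    have hcard : s.card = (s \ ({a, f a, f (f a)} : Finset α)).card + 3 := by
      rw [Finset.card_sdiff_of_subset hsub, hcardT]
      have hle := Finset.card_le_card hsub
      rw [hcardT] at hle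
      omega
    omega

end TD

/-- For every integer `n ≥ 1`, the number of `(2n+1) × (2n+1)` DASASMs is divisible by `3`. -/
theorem three_dvd_dasasm_count (n : ℕ) (hn : 1 ≤ n) : 3 ∣ (dasasmSet n).ncard := by
  obtain ⟨k, rfl⟩ : ∃ k, n = k + 1 := ⟨n - 1, by omega⟩
  have hfin : (dasasmSet (k+1)).Finite := by
    have h1 : (Set.pi Set.univ (fun _ : Fin (2*(k+1)+1) =>
        Set.pi Set.univ (fun _ : Fin (2*(k+1)+1) => ({-1, 0, 1} : Set ℤ)))).Finite :=
      Set.Finite.pi (fun _ => Set.Finite.pi (fun _ => Set.toFinite _))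
    refine Set.Finite.subset h1 ?_
    intro A hA
    intro i _
    intro j _
    have := hA.1.1 i j
    simp only [Set.mem_insert_iff, Set.mem_singleton_iff]
    tauto
  rw [Set.ncard_eq_toFinset_card _ hfin]
  apply TD.card_lemma (TD.sig (k := k))
  · intro A hA
    rw [Set.Finite.mem_toFinset] at *
    exact TD.sig_mem hA
  · intro A hA
    rw [Set.Finite.mem_toFinset] at hA
    exact TD.sig_sig_sig hA
  · intro A hA
    rw [Set.Finite.mem_toFinset] at hA
    exact TD.sig_ne hA
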